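/- arXiv:2511.11901 — 8 statements merged into one kernel-verified Lean document; each statement's English description precedes it below -/
import Mathlib

section
/- Let λ > 0 and let K ⊂ ℝⁿ be a convex body that is the intersection of a (possibly infinite) family of closed balls of radius 1/λ. Then the λ-dual body K^λ := ⋂_{x ∈ K} (x + (1/λ)B), where B is the closed unit ball, satisfies K + (−K^λ) = (1/λ)B. -/
set_option maxHeartbeats 1000000


open Metric Set MeasureTheory Pointwise RealInnerProductSpace

noncomputable section

abbrev Euc (n : ℕ) := EuclideanSpace ℝ (Fin n)

def IsConvexBody {n : ℕ} (K : Set (Euc n)) : Prop :=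
  IsCompact K ∧ Convex ℝ K ∧ (interior K).Nonempty

def IsLamConvex {n : ℕ} (lam : ℝ) (K : Set (Euc n)) : Prop :=
  IsConvexBody K ∧ ∃ C : Set (Euc n), C.Nonempty ∧ K = ⋂ c ∈ C, closedBall c (1/lam)

def lamDual {n : ℕ} (lam : ℝ) (K : Set (Euc n)) : Set (Euc n) :=
  ⋂ x ∈ K, closedBall x (1/lam)

def suppFn {n : ℕ} (K : Set (Euc n)) (u : Euc n) : ℝ :=
  sSup ((fun y => (inner ℝ u y : ℝ)) '' K)

def inradius {n : ℕ} (K : Set (Euc n)) : ℝ :=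
  sSup {r : ℝ | ∃ c, closedBall c r ⊆ K}

def circumradius {n : ℕ} (K : Set (Euc n)) : ℝ :=
  sInf {r : ℝ | ∃ c, K ⊆ closedBall c r}

def ballVol (m : ℕ) : ℝ := (volume (ball (0 : Euc m) 1)).toReal

def sphereIntegral (n : ℕ) (f : Euc n → ℝ) : ℝ :=
  ∫ u in sphere (0 : Euc n) 1, f u ∂(μH[(n : ℝ) - 1])

def intrinsicVolOne {n : ℕ} (K : Set (Euc n)) : ℝ :=
  (1 / ballVol (n - 1)) * sphereIntegral n (suppFn K)

def meanWidth {n : ℕ} (K : Set (Euc n)) : ℝ :=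
  (2 / (μH[(n : ℝ) - 1] (sphere (0 : Euc n) 1)).toReal) * sphereIntegral n (suppFn K)

def IsLens {n : ℕ} (lam : ℝ) (L : Set (Euc n)) : Prop :=
  (interior L).Nonempty ∧
    ∃ c₁ c₂ : Euc n, L = closedBall c₁ (1/lam) ∩ closedBall c₂ (1/lam)

def spindle {n : ℕ} (lam : ℝ) (p q : Euc n) : Set (Euc n) :=
  ⋂ c ∈ {c : Euc n | p ∈ closedBall c (1/lam) ∧ q ∈ closedBall c (1/lam)},
    closedBall c (1/lam)

def IsSpindle {n : ℕ} (lam : ℝ) (S : Set (Euc n)) : Prop :=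
  (interior S).Nonempty ∧ ∃ p q : Euc n, dist p q ≤ 2/lam ∧ S = spindle lam p q


lemma combo_sq {n : ℕ} (A B : Euc n) (t : ℝ) :
    ‖(1-t) • A + t • B‖^2 = (1-t)*‖A‖^2 + t*‖B‖^2 - t*(1-t)*‖A - B‖^2 := by
  have h1 : ‖(1-t)•A + t•B‖^2 = ‖(1-t)•A‖^2 + 2*⟪(1-t)•A, t•B⟫ + ‖t•B‖^2 :=
    norm_add_sq_real _ _
  have h2 : ⟪(1-t)•A, t•B⟫ = (1-t)*(t*⟪A,B⟫) := by
    rw [real_inner_smul_left, real_inner_smul_right]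
  have h3 : ‖(1-t)•A‖^2 = (1-t)^2*‖A‖^2 := by
    rw [norm_smul, Real.norm_eq_abs, mul_pow, sq_abs]
  have h4 : ‖t•B‖^2 = t^2*‖B‖^2 := by
    rw [norm_smul, Real.norm_eq_abs, mul_pow, sq_abs]
  have h5 : ‖A-B‖^2 = ‖A‖^2 - 2*⟪A,B⟫ + ‖B‖^2 := norm_sub_sq_real A B
  rw [h1, h2, h3, h4, h5]; ring

lemma key {n : ℕ} {r : ℝ} (hr : 0 < r) {C K : Set (Euc n)} (hCne : C.Nonempty)
    (hKeq : K = ⋂ c ∈ C, closedBall c r) {w x : Euc n} (hw : ‖w‖ = 1)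
    (hxK : x ∈ K) (hmax : ∀ k ∈ K, ⟪w, k⟫ ≤ ⟪w, x⟫) :
    ∀ k ∈ K, dist k (x - r • w) ≤ r := by
  intro k hk
  by_contra hcon
  push_neg at hcon
  set v : Euc n := k - x with hv
  set d : ℝ := ‖v‖ with hd
  set a : ℝ := ⟪w, v⟫ with ha
  have hww : ⟪w, w⟫ = (1:ℝ) := by
    rw [real_inner_self_eq_norm_sq, hw]; norm_num
  -- basic facts
  have ha0 : a ≤ 0 := by
    have := hmax k hk
    have : ⟪w, k - x⟫ = ⟪w,k⟫ - ⟪w,x⟫ := inner_sub_right _ _ _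
    simp only [ha, hv, this]
    linarith [hmax k hk]
  have had : |a| ≤ d := by
    have := abs_real_inner_le_norm w v
    rwa [hw, one_mul] at this
  have hδ : 0 < d^2 + 2*r*a := by
    have h1 : r < ‖v + r • w‖ := by
      rw [dist_eq_norm] at hcon
      have : k - (x - r • w) = v + r • w := by rw [hv]; abel
      rwa [this] at hcon
    have h2 : ‖v + r • w‖^2 = d^2 + 2*(r*a) + r^2 := by
      rw [norm_add_sq_real, real_inner_smul_right, norm_smul, Real.norm_eq_abs,
        mul_pow, sq_abs, hw, real_inner_comm]
      simp only [hd, ha]; ring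
    nlinarith [norm_nonneg (v + r • w)]
  have hd0 : 0 < d := by
    rcases lt_or_eq_of_le (norm_nonneg v) with h | h
    · exact h
    · exfalso; rw [← hd] at h
      have : |a| ≤ 0 := by rw [← h] at had; exact had
      have ha' : a = 0 := by simpa [abs_nonpos_iff] using this
      nlinarith
  have hd2r : d ≤ 2*r := by
    obtain ⟨c, hc⟩ := hCne
    have hxc : x ∈ closedBall c r := by
      rw [hKeq] at hxK; exact mem_iInter₂.1 hxK c hc
    have hkc : k ∈ closedBall c r := by
      rw [hKeq] at hk; exact mem_iInter₂.1 hk c hc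
    have : d = dist k x := by rw [hd, hv, dist_eq_norm]
    rw [this]
    calc dist k x ≤ dist k c + dist c x := dist_triangle _ _ _
      _ ≤ r + r := add_le_add (mem_closedBall.1 hkc) (by
            rw [dist_comm]; exact mem_closedBall.1 hxc)
      _ = 2*r := by ring
  set δ : ℝ := d^2 + 2*r*a with hδdef
  set t : ℝ := min (δ/(2*d^2)) (min (r/(2*d)) (1/2)) with htdef
  have ht0 : 0 < t := by
    apply lt_min (by positivity) (lt_min (by positivity) (by norm_num))
  have ht12 : t ≤ 1/2 := le_trans (min_le_right _ _) (min_le_right _ _)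
  have htd : t * d^2 ≤ δ/2 := by
    have h1 : t ≤ δ/(2*d^2) := min_le_left _ _
    have := mul_le_mul_of_nonneg_right h1 (by positivity : (0:ℝ) ≤ d^2)
    calc t * d^2 ≤ δ/(2*d^2) * d^2 := this
      _ = δ/2 := by field_simp
  have hta : t * (-a) < r := by
    have h1 : t ≤ r/(2*d) := le_trans (min_le_right _ _) (min_le_left _ _)
    have h2 : -a ≤ d := by cases abs_le.1 had; linarith
    have h3 : 0 ≤ -a := by linarith
    calc t * (-a) ≤ (r/(2*d)) * d := by
          apply mul_le_mul h1 h2 h3 (by positivity)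
      _ = r/2 := by field_simp
      _ < r := by linarith
  set E : ℝ := r^2 - t*(1-t)*d^2 with hEdef
  have hE0 : 0 ≤ E := by
    rw [hEdef]
    nlinarith [sq_nonneg ((1-2*t)*d),
      mul_nonneg (by linarith : (0:ℝ) ≤ 2*r - d) (by linarith : (0:ℝ) ≤ 2*r + d)]
  set s : ℝ := r - Real.sqrt E with hsdef
  have hsE : Real.sqrt E ≤ r := by
    have : E ≤ r^2 := by
      rw [hEdef]
      nlinarith [mul_nonneg (mul_nonneg ht0.le (by linarith : (0:ℝ) ≤ 1-t)) (sq_nonneg d)]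
    calc Real.sqrt E ≤ Real.sqrt (r^2) := Real.sqrt_le_sqrt this
      _ = r := Real.sqrt_sq hr.le
  have hs0 : 0 ≤ s := by simp [hsdef]; linarith
  set p : Euc n := x + t • v + s • w with hpdef
  have hpK : p ∈ K := by
    rw [hKeq]
    apply mem_iInter₂.2
    intro c hc
    have hxc : dist x c ≤ r := by
      rw [hKeq] at hxK; exact mem_closedBall.1 (mem_iInter₂.1 hxK c hc)
    have hkc : dist k c ≤ r := by
      rw [hKeq] at hk; exact mem_closedBall.1 (mem_iInter₂.1 hk c hc)
    have hq : x + t • v - c = (1-t) • (x - c) + t • (k - c) := by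
      rw [hv]; module
    have hqn : ‖x + t • v - c‖^2 ≤ E := by
      rw [hq, combo_sq]
      have h1 : (x - c) - (k - c) = -(v) := by rw [hv]; abel
      have h2 : ‖(x-c) - (k-c)‖^2 = d^2 := by rw [h1, norm_neg, hd]
      rw [h2]
      have h3 : ‖x - c‖ ≤ r := by rwa [← dist_eq_norm]
      have h4 : ‖k - c‖ ≤ r := by rwa [← dist_eq_norm]
      have h5 : ‖x-c‖^2 ≤ r^2 := pow_le_pow_left₀ (norm_nonneg _) h3 2
      have h6 : ‖k-c‖^2 ≤ r^2 := pow_le_pow_left₀ (norm_nonneg _) h4 2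
      rw [hEdef]
      nlinarith [mul_nonneg (by linarith : (0:ℝ) ≤ 1-t) (by linarith : (0:ℝ) ≤ r^2 - ‖x-c‖^2),
        mul_nonneg ht0.le (by linarith : (0:ℝ) ≤ r^2 - ‖k-c‖^2)]
    have hqle : ‖x + t • v - c‖ ≤ Real.sqrt E := by
      have := Real.sqrt_le_sqrt hqn
      rwa [Real.sqrt_sq (norm_nonneg _)] at this
    rw [mem_closedBall, dist_eq_norm]
    have : p - c = (x + t • v - c) + s • w := by rw [hpdef]; abel
    rw [this]
    calc ‖(x + t • v - c) + s • w‖ ≤ ‖x + t • v - c‖ + ‖s • w‖ := norm_add_le _ _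
      _ ≤ Real.sqrt E + s := by
          rw [norm_smul, Real.norm_eq_abs, abs_of_nonneg hs0, hw, mul_one]
          linarith
      _ = r := by rw [hsdef]; ring
  -- p strictly beats x
  have hwp : ⟪w, p⟫ = ⟪w, x⟫ + t*a + s := by
    rw [hpdef, inner_add_right, inner_add_right, real_inner_smul_right,
      real_inner_smul_right, hww, ha]
    ring
  have hst : t * (-a) < s → False := fun h => by
    have := hmax p hpK
    rw [hwp] at this
    nlinarith
  apply hst
  rw [hsdef]
  have hsq : Real.sqrt E < r - t * (-a) := by
    rw [Real.sqrt_lt' (by linarith)]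
    have h2 : -a ≤ d := by cases abs_le.1 had; linarith
    have hkey : t * (d^2 - a^2) < δ := by
      nlinarith [htd, mul_nonneg ht0.le (sq_nonneg a), hδ]
    rw [hEdef]
    nlinarith [mul_lt_mul_of_pos_left hkey ht0, ht0]
  linarith

theorem stmt0 {n : ℕ} (lam : ℝ) (hlam : 0 < lam) (K : Set (Euc n))
    (hK : IsLamConvex lam K) :
    K + (-(lamDual lam K)) = closedBall (0 : Euc n) (1/lam) := by
  unfold IsLamConvex IsConvexBody at hK
  obtain ⟨⟨hKcomp, hKconv, hKint⟩, C, hCne, hKeq⟩ := hK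
  set r : ℝ := 1/lam with hrdef
  have hr : 0 < r := by positivity
  have hKne : K.Nonempty := hKint.mono interior_subset
  set D : Set (Euc n) := lamDual lam K with hDdef
  have hDmem : ∀ y : Euc n, y ∈ D ↔ ∀ x ∈ K, dist y x ≤ r := by
    intro y
    simp only [hDdef, lamDual, mem_iInter₂, mem_closedBall, hrdef]
  -- C ⊆ D
  obtain ⟨c0, hc0⟩ := hCne
  have hc0D : c0 ∈ D := by
    rw [hDmem]
    intro x hx
    rw [hKeq] at hx
    rw [dist_comm]
    exact mem_closedBall.1 (mem_iInter₂.1 hx c0 hc0)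
  have hDconv : Convex ℝ D := by
    rw [hDdef, lamDual]
    exact convex_iInter₂ fun x _ => convex_closedBall _ _
  have hDclosed : IsClosed D := by
    rw [hDdef, lamDual]
    exact isClosed_biInter fun x _ => isClosed_closedBall
  obtain ⟨x0, hx0⟩ := hKne
  have hDcomp : IsCompact D := by
    apply (isCompact_closedBall x0 r).of_isClosed_subset hDclosed
    intro y hy
    exact mem_closedBall.2 ((hDmem y).1 hy x0 hx0)
  have hAcomp : IsCompact (K + (-D)) := hKcomp.add hDcomp.neg
  have hAconv : Convex ℝ (K + (-D)) := hKconv.add hDconv.neg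
  have hAne : (K + (-D)).Nonempty := ⟨x0 + -c0, add_mem_add hx0 (neg_mem_neg.2 hc0D)⟩
  apply Subset.antisymm
  · rintro z hz
    rw [mem_add] at hz
    obtain ⟨x, hx, y', hy', rfl⟩ := hz
    rw [mem_neg] at hy'
    have := (hDmem _).1 hy' x hx
    rw [mem_closedBall, dist_zero_right]
    calc ‖x + y'‖ = dist (-y') x := by
          rw [dist_eq_norm, show -y' - x = -(x + y') by abel, norm_neg]
      _ ≤ r := this
  · intro z hz
    by_contra hzA
    obtain ⟨f, u, hfz, hfA⟩ :=
      geometric_hahn_banach_point_closed hAconv hAcomp.isClosed hzA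
    set v : Euc n := (InnerProductSpace.toDual ℝ (Euc n)).symm f with hvdef
    have hfv : ∀ b : Euc n, f b = ⟪v, b⟫ := by
      intro b
      conv_lhs => rw [← (InnerProductSpace.toDual ℝ (Euc n)).apply_symm_apply f]
      rw [InnerProductSpace.toDual_apply_apply]
    have hv0 : v ≠ 0 := by
      intro h
      obtain ⟨a0, ha0⟩ := hAne
      have h1 := hfA a0 ha0
      rw [hfv a0, h, inner_zero_left] at h1
      rw [hfv z, h, inner_zero_left] at hfz
      linarith
    set w : Euc n := (-‖v‖⁻¹) • v with hwdef
    have hnv : 0 < ‖v‖ := norm_pos_iff.2 hv0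
    have hw1 : ‖w‖ = 1 := by
      rw [hwdef, norm_smul, Real.norm_eq_abs, abs_neg, abs_inv, abs_of_nonneg (norm_nonneg v)]
      field_simp
    obtain ⟨x, hxK, hxmax⟩ := hKcomp.exists_isMaxOn ⟨x0, hx0⟩
      (f := fun k : Euc n => ⟪w, k⟫)
      ((continuous_const.inner continuous_id).continuousOn)
    have hmax' : ∀ k ∈ K, ⟪w, k⟫ ≤ ⟪w, x⟫ := fun k hk => hxmax hk
    have hykey := key hr ⟨c0, hc0⟩ hKeq hw1 hxK hmax'
    have hyD : x - r • w ∈ D := by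
      rw [hDmem]
      intro k hk
      rw [dist_comm]
      exact hykey k hk
    have hrwA : r • w ∈ K + (-D) := by
      rw [mem_add]
      exact ⟨x, hxK, -(x - r • w), neg_mem_neg.2 hyD, by abel⟩
    have h1 := hfA _ hrwA
    rw [hfv] at h1
    have h2 : ⟪v, r • w⟫ = -(r * ‖v‖) := by
      rw [hwdef, real_inner_smul_right, real_inner_smul_right,
        real_inner_self_eq_norm_sq]
      field_simp
    rw [h2] at h1
    rw [hfv] at hfz
    have h3 : -( ‖v‖ * ‖z‖) ≤ ⟪v, z⟫ := neg_le_of_abs_le (abs_real_inner_le_norm v z)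
    have hzr : ‖z‖ ≤ r := by
      rw [mem_closedBall, dist_zero_right] at hz; exact hz
    nlinarith [norm_nonneg v, norm_nonneg z]
end
end

section
/- Let λ > 0 and let K ⊂ ℝⁿ be a λ-convex body with λ-dual K^λ. Then for every unit vector u, the support functions satisfy h_K(u) + h_{K^λ}(−u) = 1/λ. -/
open Metric Set MeasureTheory Pointwise RealInnerProductSpace

noncomputable section

open Filter Topology

set_option maxHeartbeats 1000000


variable {E : Type*} [NormedAddCommGroup E] [InnerProductSpace ℝ E]

lemma norm_comb_sq (v w : E) (hv : ‖v‖ = 1) (hw : ‖w‖ = 1)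
    (hvw : ⟪v, w⟫ = 0) (a b : ℝ) : ‖a • v + b • w‖ ^ 2 = a ^ 2 + b ^ 2 := by
  rw [norm_add_sq_real, norm_smul, norm_smul, real_inner_smul_left, real_inner_smul_right,
    hvw, hv, hw]
  simp [sq_abs]

lemma sphere_ball_iff (r : ℝ) (o c p : E) (hr : 0 ≤ r) (hp : ‖p - o‖ = r) :
    ‖p - c‖ ≤ r ↔ ‖c - o‖ ^ 2 / 2 ≤ ⟪p - o, c - o⟫ := by
  have he : p - c = (p - o) - (c - o) := by abel
  have h1 : ‖p - c‖ ^ 2 = r ^ 2 - 2 * ⟪p - o, c - o⟫ + ‖c - o‖ ^ 2 := by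
    rw [he, norm_sub_sq_real, hp]
  constructor
  · intro h
    have h2 : ‖p - c‖ ^ 2 ≤ r ^ 2 := by nlinarith [norm_nonneg (p - c)]
    nlinarith
  · intro h
    have h2 : ‖p - c‖ ^ 2 ≤ r ^ 2 := by nlinarith
    nlinarith [norm_nonneg (p - c)]

lemma arc_mem (r d t : ℝ) (hr : 0 < r) (hd : 0 < d) (hd2 : d ≤ 2 * r)
    (ht0 : 0 ≤ t) (ht1 : t ≤ 1)
    (c p v w : E) (hv : ‖v‖ = 1) (hw : ‖w‖ = 1) (hvw : ⟪v, w⟫ = 0)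
    (hpc : ‖p - c‖ ≤ r) (hqc : ‖p + d • v - c‖ ≤ r) :
    ‖p + (t * d) • v +
      (Real.sqrt (r ^ 2 - (t - 1/2) ^ 2 * d ^ 2) - Real.sqrt (r ^ 2 - d ^ 2 / 4)) • w - c‖ ≤ r := by
  have h14 : (t - 1/2) ^ 2 ≤ 1/4 := by nlinarith
  have hd4 : d ^ 2 ≤ 4 * r ^ 2 := by nlinarith
  set h : ℝ := Real.sqrt (r ^ 2 - d ^ 2 / 4) with hh
  set A : ℝ := r ^ 2 - (t - 1/2) ^ 2 * d ^ 2 with hA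
  clear_value A
  have hAnn : 0 ≤ A := by nlinarith [mul_le_mul_of_nonneg_right h14 (sq_nonneg d)]
  have hhnn : 0 ≤ h := Real.sqrt_nonneg _
  have hsq : h ^ 2 = r ^ 2 - d ^ 2 / 4 := Real.sq_sqrt (by nlinarith)
  have hsA : Real.sqrt A ^ 2 = A := Real.sq_sqrt hAnn
  have hsAnn : 0 ≤ Real.sqrt A := Real.sqrt_nonneg _
  have hAh : h ≤ Real.sqrt A := by
    rw [hh]
    exact Real.sqrt_le_sqrt (by nlinarith [mul_le_mul_of_nonneg_right h14 (sq_nonneg d)])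
  set o : E := p + (d / 2) • v - h • w with ho
  set z : E := p + (t * d) • v + (Real.sqrt A - h) • w with hz
  have epo : p - o = (-(d/2)) • v + h • w := by rw [ho]; module
  have eqo : p + d • v - o = (d/2) • v + h • w := by rw [ho]; module
  have ezo : z - o = (t * d - d / 2) • v + (Real.sqrt A) • w := by rw [hz, ho]; module
  have hpo : ‖p - o‖ = r := by
    have h2 : ‖p - o‖ ^ 2 = r ^ 2 := by rw [epo, norm_comb_sq v w hv hw hvw]; nlinarith
    nlinarith [norm_nonneg (p - o)]
  have hqo : ‖p + d • v - o‖ = r := by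
    have h2 : ‖p + d • v - o‖ ^ 2 = r ^ 2 := by rw [eqo, norm_comb_sq v w hv hw hvw]; nlinarith
    nlinarith [norm_nonneg (p + d • v - o)]
  have hzo : ‖z - o‖ = r := by
    have h2 : ‖z - o‖ ^ 2 = r ^ 2 := by
      rw [ezo, norm_comb_sq v w hv hw hvw, hsA]; rw [hA]; ring
    nlinarith [norm_nonneg (z - o)]
  rw [sphere_ball_iff r o c z hr.le hzo]
  rw [sphere_ball_iff r o c p hr.le hpo] at hpc
  rw [sphere_ball_iff r o c (p + d • v) hr.le hqo] at hqc
  set α : ℝ := ⟪v, c - o⟫ with hα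
  set β : ℝ := ⟪w, c - o⟫ with hβ
  have hip : ⟪p - o, c - o⟫ = -(d/2) * α + h * β := by
    rw [epo, inner_add_left, real_inner_smul_left, real_inner_smul_left]
  have hiq : ⟪p + d • v - o, c - o⟫ = (d/2) * α + h * β := by
    rw [eqo, inner_add_left, real_inner_smul_left, real_inner_smul_left]
  have hiz : ⟪z - o, c - o⟫ = (t * d - d/2) * α + Real.sqrt A * β := by
    rw [ezo, inner_add_left, real_inner_smul_left, real_inner_smul_left]
  rw [hip] at hpc; rw [hiq] at hqc; rw [hiz]
  set m : ℝ := ‖c - o‖ ^ 2 / 2 with hm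
  have hmnn : 0 ≤ m := by positivity
  by_cases hco : c = o
  · have : m = 0 := by rw [hm, hco]; simp
    have hα0 : α = 0 := by rw [hα, hco]; simp
    have hβ0 : β = 0 := by rw [hβ, hco]; simp
    rw [this, hα0, hβ0]; norm_num
  · have hno : 0 < ‖c - o‖ := norm_pos_iff.2 (sub_ne_zero.2 hco)
    have hmpos : 0 < m := by rw [hm]; nlinarith
    have hhb : 0 < h * β := lt_of_lt_of_le hmpos (by linarith)
    have hhpos : 0 < h := by
      rcases hhnn.lt_or_eq with h' | h'
      · exact h'
      · exfalso; rw [← h'] at hhb; simp at hhb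
    have hβnn : 0 ≤ β := by nlinarith
    nlinarith [mul_nonneg (mul_nonneg (sub_nonneg.2 ht1) hβnn) (sub_nonneg.2 hAh),
      mul_nonneg (mul_nonneg ht0 hβnn) (sub_nonneg.2 hAh)]

lemma final_ineq (r d s c1 h : ℝ) (hr : 0 < r) (hd : 0 < d) (hs0 : s ≤ 0)
    (hc1 : c1 ^ 2 = 1 - s ^ 2) (hc1nn : 0 ≤ c1) (hh : h ^ 2 = r ^ 2 - d ^ 2 / 4)
    (hhnn : 0 ≤ h) (hG : d * s * (2 * h) + d ^ 2 * c1 ≤ 0) : d ≤ 2 * r * (-s) := by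
  have h1 : d * c1 ≤ 2 * h * (-s) := by nlinarith
  have h2 : (d * c1) * (d * c1) ≤ (2 * h * (-s)) * (2 * h * (-s)) :=
    mul_self_le_mul_self (by positivity) h1
  have h3 : d ^ 2 ≤ 4 * r ^ 2 * s ^ 2 := by nlinarith
  nlinarith [mul_nonneg hr.le (neg_nonneg.2 hs0)]

theorem stmt1 {n : ℕ} (lam : ℝ) (hlam : 0 < lam) (K : Set (Euc n))
    (hK : IsLamConvex lam K) (u : Euc n) (hu : ‖u‖ = 1) :
    suppFn K u + suppFn (lamDual lam K) (-u) = 1/lam := by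
  obtain ⟨⟨hKc, hKconv, hKint⟩, C, ⟨c₀, hc₀⟩, hKeq⟩ := hK
  set r : ℝ := 1/lam with hrdef
  have hr : 0 < r := by positivity
  have hKne : K.Nonempty := hKint.mono interior_subset
  have hcont : Continuous fun y : Euc n => (⟪u, y⟫ : ℝ) := continuous_const.inner continuous_id
  obtain ⟨xs, hxsK, hxs⟩ := hKc.exists_isMaxOn hKne hcont.continuousOn
  -- membership characterizations
  have hmemK : ∀ x ∈ K, ∀ c ∈ C, ‖x - c‖ ≤ r := by
    intro x hx c hc
    rw [hKeq] at hx
    have := mem_iInter₂.1 hx c hc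
    rwa [mem_closedBall, dist_eq_norm] at this
  have hmemD : ∀ y : Euc n, y ∈ lamDual lam K ↔ ∀ x ∈ K, ‖y - x‖ ≤ r := by
    intro y
    rw [lamDual, mem_iInter₂]
    simp only [mem_closedBall, dist_eq_norm, hrdef]
  -- dual nonempty, compact
  have hDne : (lamDual lam K).Nonempty := by
    refine ⟨c₀, (hmemD c₀).2 fun x hx => ?_⟩
    have := hmemK x hx c₀ hc₀
    rwa [norm_sub_rev] at this
  have hDcpt : IsCompact (lamDual lam K) := by
    have hclosed : IsClosed (lamDual lam K) :=
      isClosed_biInter fun x _ => isClosed_closedBall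
    have hsub : lamDual lam K ⊆ closedBall xs r := by
      intro y hy
      rw [mem_closedBall, dist_eq_norm]
      exact (hmemD y).1 hy xs hxsK
    exact (isCompact_closedBall xs r).of_isClosed_subset hclosed hsub
  have hcont2 : Continuous fun y : Euc n => (⟪-u, y⟫ : ℝ) := continuous_const.inner continuous_id
  obtain ⟨ys, hysD, hys⟩ := hDcpt.exists_isMaxOn hDne hcont2.continuousOn
  -- support function values
  have hsuppK : suppFn K u = ⟪u, xs⟫ := by
    refine le_antisymm (csSup_le (hKne.image _) ?_) (le_csSup (hKc.image hcont).bddAbove ⟨xs, hxsK, rfl⟩)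
    rintro _ ⟨y, hy, rfl⟩
    exact hxs hy
  have hsuppD : suppFn (lamDual lam K) (-u) = ⟪-u, ys⟫ := by
    refine le_antisymm (csSup_le (hDne.image _) ?_) (le_csSup (hDcpt.image hcont2).bddAbove ⟨ys, hysD, rfl⟩)
    rintro _ ⟨y, hy, rfl⟩
    exact hys hy
  -- upper bound
  have hupper : ⟪u, xs⟫ + ⟪-u, ys⟫ ≤ r := by
    have h1 : ⟪u, xs⟫ + ⟪-u, ys⟫ = ⟪u, xs - ys⟫ := by
      rw [inner_sub_right, inner_neg_left]; ring
    have h2 : ⟪u, xs - ys⟫ ≤ ‖u‖ * ‖xs - ys‖ := real_inner_le_norm _ _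
    have h3 : ‖ys - xs‖ ≤ r := (hmemD ys).1 hysD xs hxsK
    rw [norm_sub_rev] at h3
    rw [hu, one_mul] at h2
    rw [h1]
    linarith
  -- key : xs - r • u ∈ lamDual
  have hkey : xs - r • u ∈ lamDual lam K := by
    rw [hmemD]
    intro x hx
    by_cases hxx : x = xs
    · subst hxx
      have : x - r • u - x = -(r • u) := by abel
      rw [this, norm_neg, norm_smul, hu, Real.norm_eq_abs, abs_of_pos hr, mul_one]
    -- main case
    set d : ℝ := ‖x - xs‖ with hddef
    have hdpos : 0 < d := by
      rw [hddef]
      exact norm_pos_iff.2 (sub_ne_zero.2 hxx)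
    set v : Euc n := d⁻¹ • (x - xs) with hvdef
    have hv : ‖v‖ = 1 := by
      rw [hvdef, norm_smul, Real.norm_eq_abs, abs_inv, abs_of_pos hdpos, ← hddef]
      field_simp
    have hdv : d • v = x - xs := by
      rw [hvdef, smul_smul]
      field_simp
      rw [one_smul]
    have hxeq : x = xs + d • v := by rw [hdv]; abel
    set s : ℝ := ⟪u, v⟫ with hsdef
    have hds : ⟪u, x - xs⟫ = d * s := by
      rw [← hdv, real_inner_smul_right]
    have hs0 : s ≤ 0 := by
      have h1 : ⟪u, x⟫ ≤ ⟪u, xs⟫ := hxs hx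
      have h2 : ⟪u, x - xs⟫ ≤ 0 := by rw [inner_sub_right]; linarith
      rw [hds] at h2
      by_contra hpos
      push_neg at hpos
      nlinarith [mul_pos hdpos hpos]
    have hs1 : -1 ≤ s := by
      have := abs_real_inner_le_norm u v
      rw [hu, hv, one_mul] at this
      have := abs_le.1 this
      rw [hsdef]; exact this.1
    have hd2r : d ≤ 2 * r := by
      have h1 : ‖x - c₀‖ ≤ r := hmemK x hx c₀ hc₀
      have h2 : ‖xs - c₀‖ ≤ r := hmemK xs hxsK c₀ hc₀
      have h3 : ‖x - xs‖ ≤ ‖x - c₀‖ + ‖xs - c₀‖ := by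
        have : x - xs = (x - c₀) - (xs - c₀) := by abel
        rw [this]
        exact norm_sub_le _ _
      rw [hddef]; linarith
    -- reduce to d ≤ 2r(-s)
    have main : d ≤ 2 * r * (-s) := by
      rcases eq_or_lt_of_le hs1 with hseq | hslt
      · rw [← hseq]; linarith
      -- construct w
      have hs2 : s ^ 2 < 1 := by nlinarith
      set c1 : ℝ := Real.sqrt (1 - s ^ 2) with hc1def
      have hc1pos : 0 < c1 := Real.sqrt_pos.2 (by linarith)
      have hc1sq : c1 ^ 2 = 1 - s ^ 2 := Real.sq_sqrt (by linarith)
      have husv : ‖u - s • v‖ = c1 := by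
        have h1 : ‖u - s • v‖ ^ 2 = 1 - s ^ 2 := by
          rw [norm_sub_sq_real, real_inner_smul_right, norm_smul, hu, hv, Real.norm_eq_abs]
          rw [mul_one, sq_abs]
          ring
        nlinarith [norm_nonneg (u - s • v), Real.sqrt_nonneg (1 - s^2)]
      set w : Euc n := c1⁻¹ • (u - s • v) with hwdef
      have hw : ‖w‖ = 1 := by
        rw [hwdef, norm_smul, Real.norm_eq_abs, abs_inv, abs_of_pos hc1pos, husv]
        field_simp
      have hvw : ⟪v, w⟫ = 0 := by
        rw [hwdef, real_inner_smul_right, inner_sub_right, real_inner_smul_right,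
          real_inner_self_eq_norm_sq, hv, real_inner_comm, ← hsdef]
        ring
      have huw : ⟪u, w⟫ = c1 := by
        rw [hwdef, real_inner_smul_right, inner_sub_right, real_inner_smul_right,
          real_inner_self_eq_norm_sq, hu, ← hsdef]
        rw [inv_mul_eq_iff_eq_mul₀ (ne_of_gt hc1pos)]
        nlinarith
      -- the arc curve lies in K
      set h : ℝ := Real.sqrt (r ^ 2 - d ^ 2 / 4) with hhdef
      have hhnn : 0 ≤ h := Real.sqrt_nonneg _
      have hhsq : h ^ 2 = r ^ 2 - d ^ 2 / 4 := Real.sq_sqrt (by nlinarith)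
      have hzK : ∀ t : ℝ, 0 ≤ t → t ≤ 1 →
          xs + (t * d) • v + (Real.sqrt (r ^ 2 - (t - 1/2) ^ 2 * d ^ 2) - h) • w ∈ K := by
        intro t ht0 ht1
        rw [hKeq, mem_iInter₂]
        intro c hc
        have h1 : ‖xs - c‖ ≤ r := hmemK xs hxsK c hc
        have h2 : ‖xs + d • v - c‖ ≤ r := by
          rw [← hxeq]
          exact hmemK x hx c hc
        have := arc_mem r d t hr hdpos hd2r ht0 ht1 c xs v w hv hw hvw h1 h2
        rw [mem_closedBall, dist_eq_norm, hhdef]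
        exact this
      -- inequality G t ≤ 0 on (0,1)
      set G : ℝ → ℝ := fun t =>
        d * s * (Real.sqrt (r ^ 2 - (t - 1/2) ^ 2 * d ^ 2) + h) + (1 - t) * d ^ 2 * c1
        with hGdef
      have hG : ∀ t ∈ Ioo (0:ℝ) 1, G t ≤ 0 := by
        intro t ht
        obtain ⟨ht0, ht1⟩ := ht
        set A : ℝ := r ^ 2 - (t - 1/2) ^ 2 * d ^ 2 with hAdef
        have hAval : A = h ^ 2 + d ^ 2 * (t * (1 - t)) := by rw [hAdef, hhsq]; ring
        have hApos : 0 < A := by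
          have hp : 0 < d ^ 2 * (t * (1 - t)) :=
            mul_pos (pow_pos hdpos 2) (mul_pos ht0 (by linarith))
          rw [hAval]
          nlinarith [sq_nonneg h]
        have hsApos : 0 < Real.sqrt A := Real.sqrt_pos.2 hApos
        have hsAsq : Real.sqrt A ^ 2 = A := Real.sq_sqrt hApos.le
        have hineq : t * d * s + (Real.sqrt A - h) * c1 ≤ 0 := by
          have hz' : (⟪u, xs + (t * d) • v +
              (Real.sqrt (r ^ 2 - (t - 1/2) ^ 2 * d ^ 2) - h) • w⟫ : ℝ) ≤ ⟪u, xs⟫ :=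
            hxs (hzK t ht0.le ht1.le)
          rw [inner_add_right, inner_add_right, real_inner_smul_right u v (t * d),
            real_inner_smul_right u w (Real.sqrt (r ^ 2 - (t - 1/2) ^ 2 * d ^ 2) - h),
            ← hsdef, huw, ← hAdef] at hz'
          linarith
        have hprod : (Real.sqrt A - h) * (Real.sqrt A + h) = d ^ 2 * (t * (1 - t)) := by
          linear_combination hsAsq + hAval
        have htG : t * G t ≤ 0 := by
          have h1 : (t * d * s + (Real.sqrt A - h) * c1) * (Real.sqrt A + h) ≤ 0 :=
            mul_nonpos_of_nonpos_of_nonneg hineq (by positivity)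
          have h2 : t * G t = (t * d * s + (Real.sqrt A - h) * c1) * (Real.sqrt A + h) := by
            have hA2 : Real.sqrt A ^ 2 = h ^ 2 + d ^ 2 * (t * (1 - t)) := by
              rw [hsAsq, hAval]
            rw [hGdef]
            simp only
            rw [← hAdef]
            linear_combination (-c1) * hA2
          linarith [h2 ▸ h1]
        by_contra hGpos
        push_neg at hGpos
        have : 0 < t * G t := mul_pos ht0 hGpos
        linarith
      -- limit t → 0⁺
      have hpoly : Continuous fun t : ℝ => r ^ 2 - (t - 1/2) ^ 2 * d ^ 2 :=
        continuous_const.sub (((continuous_id.sub continuous_const).pow 2).mul continuous_const)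
      have hGcont : Continuous G := by
        rw [hGdef]
        exact (continuous_const.mul ((Real.continuous_sqrt.comp hpoly).add continuous_const)).add
          (((continuous_const.sub continuous_id).mul continuous_const).mul continuous_const)
      have hG0 : G 0 ≤ 0 := by
        have htend : Tendsto G (𝓝[>] (0:ℝ)) (𝓝 (G 0)) :=
          (hGcont.tendsto 0).mono_left nhdsWithin_le_nhds
        refine le_of_tendsto htend ?_
        filter_upwards [Ioo_mem_nhdsGT_of_mem (by norm_num : (0:ℝ) ∈ Ico (0:ℝ) 1)] with t ht
        exact hG t ht
      have hG0' : d * s * (2 * h) + d ^ 2 * c1 ≤ 0 := by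
        have he : ((0:ℝ) - 1/2) ^ 2 * d ^ 2 = d ^ 2 / 4 := by ring
        rw [hGdef] at hG0
        simp only at hG0
        rw [he, ← hhdef] at hG0
        linarith
      exact final_ineq r d s c1 h hr hdpos hs0 hc1sq hc1pos.le hhsq hhnn hG0'
    -- finish : dist bound
    have hgoal : ‖xs - r • u - x‖ ^ 2 ≤ r ^ 2 := by
      have he : xs - r • u - x = -(d • v + r • u) := by rw [hxeq]; abel
      have hnv : ‖d • v‖ = d := by
        rw [norm_smul, hv, mul_one, Real.norm_eq_abs, abs_of_pos hdpos]
      have hnu : ‖r • u‖ = r := by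
        rw [norm_smul, hu, mul_one, Real.norm_eq_abs, abs_of_pos hr]
      have hiv : (⟪d • v, r • u⟫ : ℝ) = d * r * s := by
        rw [real_inner_smul_left, real_inner_smul_right, real_inner_comm, ← hsdef]
        ring
      rw [he, norm_neg, norm_add_sq_real, hnv, hnu, hiv]
      nlinarith [mul_nonneg hdpos.le (sub_nonneg.2 main)]
    nlinarith [norm_nonneg (xs - r • u - x), hgoal, hr]
  -- lower bound
  have hlower : r - ⟪u, xs⟫ ≤ ⟪-u, ys⟫ := by
    have h1 : (⟪-u, xs - r • u⟫ : ℝ) = r - ⟪u, xs⟫ := by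
      rw [inner_neg_left, inner_sub_right, real_inner_smul_right, real_inner_self_eq_norm_sq, hu]
      ring
    have h2 : (⟪-u, xs - r • u⟫ : ℝ) ≤ ⟪-u, ys⟫ := hys hkey
    linarith
  rw [hsuppK, hsuppD]
  linarith
end
end

section
/- Let λ > 0 and let K ⊂ ℝⁿ be a λ-convex body. Then the λ-duality is an involution: (K^λ)^λ = K. -/
open Metric Set MeasureTheory Pointwise RealInnerProductSpace

noncomputable section

theorem stmt3 {n : ℕ} (lam : ℝ) (hlam : 0 < lam) (K : Set (Euc n))
    (hK : IsLamConvex lam K) :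
    lamDual lam (lamDual lam K) = K := by
  obtain ⟨-, C, -, hC⟩ := hK
  apply Set.Subset.antisymm
  · intro z hz
    rw [hC]
    refine Set.mem_iInter₂.2 fun c hc => ?_
    have hcK : c ∈ lamDual lam K := by
      refine Set.mem_iInter₂.2 fun x hx => ?_
      rw [hC] at hx
      have := Set.mem_iInter₂.1 hx c hc
      simpa [Metric.mem_closedBall, dist_comm] using this
    exact Set.mem_iInter₂.1 hz c hcK
  · intro x hx
    refine Set.mem_iInter₂.2 fun y hy => ?_
    have := Set.mem_iInter₂.1 hy x hx
    simpa [Metric.mem_closedBall, dist_comm] using this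
end
end

section
/- Let f : [0, π/2] → ℝ be continuous and strictly increasing, and let q : [0, π/2] → ℝ be continuous, nonnegative, and strictly increasing with q not identically zero. Suppose ∫₀^{π/2} f(t) q(t) dt = 0. Then for every φ ∈ [0, π/2], ∫₀^{φ} f(t) q(t) dt ≤ 0, with equality if and only if φ = 0 or φ = π/2. -/
open Metric Set MeasureTheory Pointwise RealInnerProductSpace

noncomputable section

open Real in
theorem stmt9 (f q : ℝ → ℝ)
    (hfc : ContinuousOn f (Icc 0 (π/2))) (hfm : StrictMonoOn f (Icc 0 (π/2)))
    (hqc : ContinuousOn q (Icc 0 (π/2))) (hq0 : ∀ t ∈ Icc (0:ℝ) (π/2), 0 ≤ q t)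
    (hqm : StrictMonoOn q (Icc 0 (π/2)))
    (hqne : ∃ t ∈ Icc (0:ℝ) (π/2), q t ≠ 0)
    (hint : (∫ t in (0:ℝ)..(π/2), f t * q t) = 0) :
    ∀ φ ∈ Icc (0:ℝ) (π/2),
      (∫ t in (0:ℝ)..φ, f t * q t) ≤ 0 ∧
        ((∫ t in (0:ℝ)..φ, f t * q t) = 0 ↔ φ = 0 ∨ φ = π/2) := by
  have hπ : (0:ℝ) < π/2 := by positivity
  have hcont : ContinuousOn (fun t => f t * q t) (Icc 0 (π/2)) := hfc.mul hqc
  have hii : ∀ a b, a ∈ Icc (0:ℝ) (π/2) → b ∈ Icc (0:ℝ) (π/2) →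
      IntervalIntegrable (fun t => f t * q t) volume a b := by
    intro a b ha hb
    exact (hcont.mono (Set.uIcc_subset_Icc ha hb)).intervalIntegrable
  have h0mem : (0:ℝ) ∈ Icc (0:ℝ) (π/2) := ⟨le_refl 0, hπ.le⟩
  have hπmem : (π/2) ∈ Icc (0:ℝ) (π/2) := ⟨hπ.le, le_refl _⟩
  have hqpos : ∀ t ∈ Ioc (0:ℝ) (π/2), 0 < q t := by
    intro t ht
    exact lt_of_le_of_lt (hq0 0 h0mem) (hqm h0mem ⟨ht.1.le, ht.2⟩ ht.1)
  -- f 0 < 0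
  have hf0 : f 0 < 0 := by
    by_contra h
    push_neg at h
    have hpos : ∀ t ∈ Ioo (0:ℝ) (π/2), 0 < f t * q t := by
      intro t ht
      have hft : 0 < f t := lt_of_le_of_lt h (hfm h0mem ⟨ht.1.le, ht.2.le⟩ ht.1)
      exact mul_pos hft (hqpos t ⟨ht.1, ht.2.le⟩)
    have := intervalIntegral.intervalIntegral_pos_of_pos_on (hii 0 (π/2) h0mem hπmem) hpos hπ
    linarith
  -- f (π/2) > 0
  have hfπ : 0 < f (π/2) := by
    by_contra h
    push_neg at h
    have hneg : ∀ t ∈ Ioo (0:ℝ) (π/2), 0 < -(f t * q t) := by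
      intro t ht
      have hft : f t < 0 := lt_of_lt_of_le (hfm ⟨ht.1.le, ht.2.le⟩ hπmem ht.2) h
      have := mul_neg_of_neg_of_pos hft (hqpos t ⟨ht.1, ht.2.le⟩)
      linarith
    have := intervalIntegral.intervalIntegral_pos_of_pos_on
      ((hii 0 (π/2) h0mem hπmem).neg) hneg hπ
    simp only [Pi.neg_apply, intervalIntegral.integral_neg] at this
    linarith
  -- zero of f
  obtain ⟨t₀, ht₀, hft₀⟩ : ∃ t₀ ∈ Ioo (0:ℝ) (π/2), f t₀ = 0 := by
    have := intermediate_value_Ioo hπ.le hfc (a := 0) (b := π/2)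
    obtain ⟨t₀, ht₀, h⟩ := this ⟨hf0, hfπ⟩
    exact ⟨t₀, ht₀, h⟩
  -- key: strict negativity on the open interval
  have key : ∀ φ ∈ Ioo (0:ℝ) (π/2), (∫ t in (0:ℝ)..φ, f t * q t) < 0 := by
    intro φ hφ
    have hφmem : φ ∈ Icc (0:ℝ) (π/2) := ⟨hφ.1.le, hφ.2.le⟩
    by_cases hcase : φ ≤ t₀
    · have hneg : ∀ t ∈ Ioo (0:ℝ) φ, 0 < -(f t * q t) := by
        intro t ht
        have htmem : t ∈ Icc (0:ℝ) (π/2) := ⟨ht.1.le, le_trans ht.2.le hφ.2.le⟩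
        have hft : f t < 0 := by
          have := hfm htmem ⟨ht₀.1.le, ht₀.2.le⟩ (lt_of_lt_of_le ht.2 hcase)
          linarith [hft₀]
        have := mul_neg_of_neg_of_pos hft (hqpos t ⟨ht.1, le_trans ht.2.le hφ.2.le⟩)
        linarith
      have := intervalIntegral.intervalIntegral_pos_of_pos_on
        ((hii 0 φ h0mem hφmem).neg) hneg hφ.1
      simp only [Pi.neg_apply, intervalIntegral.integral_neg] at this
      linarith
    · push_neg at hcase
      have hpos : ∀ t ∈ Ioo φ (π/2), 0 < f t * q t := by
        intro t ht
        have htmem : t ∈ Icc (0:ℝ) (π/2) := ⟨le_trans hφ.1.le ht.1.le, ht.2.le⟩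
        have hft : 0 < f t := by
          have := hfm ⟨ht₀.1.le, ht₀.2.le⟩ htmem (lt_trans hcase ht.1)
          linarith [hft₀]
        exact mul_pos hft (hqpos t ⟨lt_trans hφ.1 ht.1, ht.2.le⟩)
      have h2 := intervalIntegral.intervalIntegral_pos_of_pos_on
        (hii φ (π/2) hφmem hπmem) hpos hφ.2
      have hadd := intervalIntegral.integral_add_adjacent_intervals
        (hii 0 φ h0mem hφmem) (hii φ (π/2) hφmem hπmem)
      rw [hint] at hadd
      linarith
  intro φ hφ
  rcases eq_or_lt_of_le hφ.1 with h0 | h0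
  · subst h0
    simp [intervalIntegral.integral_same]
  rcases eq_or_lt_of_le hφ.2 with h1 | h1
  · subst h1
    simp [hint]
  · have := key φ ⟨h0, h1⟩
    constructor
    · linarith
    · constructor
      · intro h; linarith
      · rintro (h | h) <;> [exact absurd h (ne_of_gt h0); exact absurd h (ne_of_lt h1)]
end
end

section
/- Let n ≥ 2, and let h : [0, π/2] → ℝ be continuous and strictly increasing. Define q(t) = sin(t)^{n−2} and A = (∫₀^{π/2} h(t)q(t)dt)/(∫₀^{π/2} q(t)dt). Then for every measurable function φ : S^{n−2} → [0, π/2], ∫_{S^{n−2}} ∫₀^{φ(θ)} h(t)q(t) dt dθ ≤ A · ∫_{S^{n−2}} ∫₀^{φ(θ)} q(t) dt dθ. -/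
open Metric Set MeasureTheory Pointwise RealInnerProductSpace
open scoped NNReal

noncomputable section

def sphEmb {k : ℕ} (i : Fin (k+1)) (σ : ℝ) (y : Fin k → ℝ) : Euc (k+1) :=
  WithLp.toLp 2 (i.insertNth (α := fun _ => ℝ) σ y)

lemma proj_lipschitz {m : ℕ} :
    LipschitzOnWith 2 (fun z : Euc m => ‖z‖⁻¹ • z) {z : Euc m | 1 ≤ ‖z‖} := by
  rw [lipschitzOnWith_iff_dist_le_mul]
  intro z hz w hw
  simp only [mem_setOf_eq] at hz hw
  have ha : (0:ℝ) < ‖z‖ := lt_of_lt_of_le one_pos hz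
  have hb : (0:ℝ) < ‖w‖ := lt_of_lt_of_le one_pos hw
  have key : ‖z‖⁻¹ • z - ‖w‖⁻¹ • w = ‖z‖⁻¹ • (z - w) + (‖z‖⁻¹ - ‖w‖⁻¹) • w := by
    rw [smul_sub, sub_smul]; abel
  rw [dist_eq_norm, key, dist_eq_norm]
  have h1 : ‖‖z‖⁻¹ • (z - w) + (‖z‖⁻¹ - ‖w‖⁻¹) • w‖
      ≤ ‖z‖⁻¹ * ‖z - w‖ + |‖z‖⁻¹ - ‖w‖⁻¹| * ‖w‖ := by
    refine (norm_add_le _ _).trans ?_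
    rw [norm_smul, norm_smul, Real.norm_eq_abs, Real.norm_eq_abs, abs_of_pos (by positivity)]
  refine h1.trans ?_
  have h2 : |‖z‖⁻¹ - ‖w‖⁻¹| * ‖w‖ = |‖w‖ - ‖z‖| / ‖z‖ := by
    rw [show ‖z‖⁻¹ - ‖w‖⁻¹ = (‖w‖ - ‖z‖) / (‖z‖ * ‖w‖) by field_simp, abs_div, abs_mul,
      abs_of_pos ha, abs_of_pos hb]
    field_simp
  rw [h2]
  have h3 : |‖w‖ - ‖z‖| ≤ ‖z - w‖ := by
    rw [abs_sub_comm]; exact abs_norm_sub_norm_le z w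
  have h4 : |‖w‖ - ‖z‖| / ‖z‖ ≤ ‖z - w‖ := by
    rw [div_le_iff₀ ha]
    calc |‖w‖ - ‖z‖| ≤ ‖z - w‖ := h3
      _ = ‖z - w‖ * 1 := (mul_one _).symm
      _ ≤ ‖z - w‖ * ‖z‖ := by gcongr
  have h5 : ‖z‖⁻¹ * ‖z - w‖ ≤ ‖z - w‖ := by
    rw [inv_mul_le_iff₀ ha]
    calc ‖z - w‖ = 1 * ‖z - w‖ := (one_mul _).symm
      _ ≤ ‖z‖ * ‖z - w‖ := by gcongr
  push_cast
  linarith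

lemma emb_lipschitz {k : ℕ} (i : Fin (k+1)) (σ : ℝ) :
    LipschitzWith (k+1) (sphEmb i σ) := by
  apply LipschitzWith.of_dist_le_mul
  intro y y'
  have hgoal : dist (sphEmb i σ y) (sphEmb i σ y') ≤ ((k:ℝ)+1) * dist y y' := by
    rw [EuclideanSpace.dist_eq]
    have hb : ∀ j : Fin (k+1),
        dist (sphEmb i σ y j) (sphEmb i σ y' j) ≤ dist y y' := by
      intro j
      refine Fin.succAboveCases i ?_ ?_ j
      · simp only [sphEmb, PiLp.toLp_apply, Fin.insertNth_apply_same]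
        simpa using dist_nonneg (x := y) (y := y')
      · intro l
        simp only [sphEmb, PiLp.toLp_apply, Fin.insertNth_apply_succAbove]
        exact dist_le_pi_dist y y' l
    calc Real.sqrt (∑ j, dist (sphEmb i σ y j) (sphEmb i σ y' j) ^ 2)
        ≤ Real.sqrt (∑ _j : Fin (k+1), dist y y' ^ 2) := by
          apply Real.sqrt_le_sqrt
          apply Finset.sum_le_sum
          intro j _
          exact pow_le_pow_left₀ dist_nonneg (hb j) 2
      _ = Real.sqrt (((k:ℝ)+1) * dist y y' ^ 2) := by
          rw [Finset.sum_const, Finset.card_univ]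
          simp [nsmul_eq_mul]
      _ ≤ Real.sqrt ((((k:ℝ)+1))^2 * dist y y' ^ 2) := by
          apply Real.sqrt_le_sqrt
          have h1 : ((k:ℝ)+1) ≤ ((k:ℝ)+1)^2 := by nlinarith [Nat.cast_nonneg (α := ℝ) k]
          nlinarith [sq_nonneg (dist y y')]
      _ = ((k:ℝ)+1) * dist y y' := by
          rw [← mul_pow, Real.sqrt_sq (by positivity)]
  refine hgoal.trans_eq ?_
  push_cast
  ring

lemma coord_le_norm {m : ℕ} (x : Euc m) (i : Fin m) : |x i| ≤ ‖x‖ := by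
  rw [EuclideanSpace.norm_eq]
  have h1 : ‖x i‖ ^ 2 ≤ ∑ j, ‖x j‖ ^ 2 :=
    Finset.single_le_sum (f := fun j => ‖x j‖ ^ 2) (fun j _ => by positivity) (Finset.mem_univ i)
  have := Real.sqrt_le_sqrt h1
  rwa [Real.sqrt_sq_eq_abs, Real.norm_eq_abs, abs_abs] at this

lemma sphere_hausdorff_lt_top (k : ℕ) :
    μH[(k:ℝ)] (sphere (0 : Euc (k+1)) 1) < ⊤ := by
  classical
  set B : Set (Fin k → ℝ) := closedBall 0 1 with hB
  have hvolB : μH[(k:ℝ)] B < ⊤ := by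
    have hμ : (μH[(k:ℝ)] : Measure (Fin k → ℝ)) = volume := by
      have := MeasureTheory.hausdorffMeasure_pi_real (ι := Fin k)
      simpa using this
    rw [hμ]
    exact (isCompact_closedBall _ _).measure_lt_top
  set P : Euc (k+1) → Euc (k+1) := fun z => ‖z‖⁻¹ • z with hP
  set F : Fin (k+1) → ℝ → (Fin k → ℝ) → Euc (k+1) := fun i σ y => P (sphEmb i σ y) with hF
  have himg : ∀ (i : Fin (k+1)) (σ : ℝ), |σ| = 1 → μH[(k:ℝ)] (F i σ '' B) < ⊤ := by
    intro i σ hσ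
    have hmaps : MapsTo (sphEmb i σ) B {z : Euc (k+1) | 1 ≤ ‖z‖} := by
      intro y _
      simp only [mem_setOf_eq]
      calc (1:ℝ) = |σ| := hσ.symm
        _ = |sphEmb i σ y i| := by
            simp [sphEmb, Fin.insertNth_apply_same]
        _ ≤ ‖sphEmb i σ y‖ := coord_le_norm _ i
    have hlip : LipschitzOnWith (2 * (k+1)) (F i σ) B := by
      exact proj_lipschitz.comp ((emb_lipschitz i σ).lipschitzOnWith (s := B)) hmaps
    refine lt_of_le_of_lt (hlip.hausdorffMeasure_image_le (by positivity)) ?_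
    exact ENNReal.mul_lt_top
      (ENNReal.rpow_lt_top_of_nonneg (by positivity) ENNReal.coe_ne_top) hvolB
  have cover : sphere (0 : Euc (k+1)) 1 ⊆
      ⋃ i : Fin (k+1), (F i 1 '' B ∪ F i (-1) '' B) := by
    intro x hx
    have hx1 : ‖x‖ = 1 := by simpa using hx
    obtain ⟨i, -, hi⟩ := Finset.exists_max_image (Finset.univ : Finset (Fin (k+1)))
      (fun j => |x j|) Finset.univ_nonempty
    have hc : 0 < |x i| := by
      rcases (abs_nonneg (x i)).lt_or_eq with h | h
      · exact h
      · exfalso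
        have hx0 : x = 0 := by
          ext j
          have h2 := hi j (Finset.mem_univ j)
          have : |x j| = 0 := le_antisymm (h2.trans h.symm.le) (abs_nonneg _)
          simpa [abs_eq_zero] using this
        rw [hx0] at hx1
        simp at hx1
    set σ : ℝ := x i / |x i| with hσdef
    have hσ1 : |σ| = 1 := by
      rw [hσdef, abs_div, abs_abs, div_self hc.ne']
    set y : Fin k → ℝ := fun j => (|x i|)⁻¹ * x (i.succAbove j) with hy
    have hyB : y ∈ B := by
      rw [hB, mem_closedBall_zero_iff, pi_norm_le_iff_of_nonneg zero_le_one]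
      intro j
      rw [hy]
      simp only [Real.norm_eq_abs, abs_mul, abs_inv, abs_abs]
      rw [inv_mul_le_iff₀ hc]
      simpa using hi _ (Finset.mem_univ (i.succAbove j))
    have hE : sphEmb i σ y = (|x i|)⁻¹ • x := by
      ext j
      refine Fin.succAboveCases i ?_ ?_ j
      · simp only [sphEmb, PiLp.toLp_apply, Fin.insertNth_apply_same]
        show σ = (|x i|)⁻¹ * x i
        rw [hσdef, div_eq_inv_mul]
      · intro l
        simp only [sphEmb, PiLp.toLp_apply, Fin.insertNth_apply_succAbove]
        rfl
    have hFx : F i σ y = x := by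
      show P (sphEmb i σ y) = x
      rw [hE, hP]
      have hnorm : ‖(|x i|)⁻¹ • x‖ = (|x i|)⁻¹ := by
        rw [norm_smul, hx1, mul_one, Real.norm_eq_abs, abs_inv, abs_abs]
      show ‖(|x i|)⁻¹ • x‖⁻¹ • ((|x i|)⁻¹ • x) = x
      rw [hnorm, inv_inv, smul_smul, mul_inv_cancel₀ hc.ne', one_smul]
    refine mem_iUnion.2 ⟨i, ?_⟩
    rcases le_or_gt 0 (x i) with h0 | h0
    · left
      refine ⟨y, hyB, ?_⟩
      have : σ = 1 := by
        rw [hσdef, abs_of_nonneg h0, div_self]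
        intro hcon; rw [hcon] at hc; simp at hc
      rw [← this, hFx]
    · right
      refine ⟨y, hyB, ?_⟩
      have : σ = -1 := by
        rw [hσdef, abs_of_neg h0, div_neg, div_self h0.ne]
      rw [← this, hFx]
  refine lt_of_le_of_lt ((measure_mono cover).trans (measure_iUnion_le _)) ?_
  rw [tsum_fintype]
  refine (ENNReal.sum_lt_top).2 ?_
  intro i _
  exact lt_of_le_of_lt (measure_union_le _ _)
    (ENNReal.add_lt_top.2 ⟨himg i 1 (by norm_num), himg i (-1) (by norm_num)⟩)


set_option maxHeartbeats 1000000 in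
open Real in
lemma stmt10_aux (k : ℕ) (h : ℝ → ℝ)
    (hc : ContinuousOn h (Icc 0 (π/2))) (hm : StrictMonoOn h (Icc 0 (π/2)))
    (φ : Euc (k+1) → ℝ) (hφ : Measurable φ) (hφr : ∀ θ, φ θ ∈ Icc (0:ℝ) (π/2)) :
    (∫ θ in sphere (0 : Euc (k+1)) 1,
        (∫ t in (0:ℝ)..(φ θ), h t * Real.sin t ^ k) ∂(μH[(k:ℝ)]))
      ≤ ((∫ t in (0:ℝ)..(π/2), h t * Real.sin t ^ k)
            / (∫ t in (0:ℝ)..(π/2), Real.sin t ^ k))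
          * ∫ θ in sphere (0 : Euc (k+1)) 1,
              (∫ t in (0:ℝ)..(φ θ), Real.sin t ^ k) ∂(μH[(k:ℝ)]) := by
  have hπ : (0:ℝ) < π/2 := by positivity
  set q : ℝ → ℝ := fun t => Real.sin t ^ k with hq
  have hqc : Continuous q := Real.continuous_sin.pow k
  have hqnn : ∀ t ∈ Icc (0:ℝ) (π/2), 0 ≤ q t := fun t ht =>
    pow_nonneg (Real.sin_nonneg_of_nonneg_of_le_pi ht.1
      (ht.2.trans (by linarith [Real.pi_pos]))) k
  have hInt : ∀ a b : ℝ, 0 ≤ a → b ≤ π/2 → a ≤ b →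
      IntervalIntegrable (fun t => h t * q t) volume a b := by
    intro a b ha hb hab
    apply ContinuousOn.intervalIntegrable
    apply ContinuousOn.mul _ hqc.continuousOn
    apply hc.mono
    rw [uIcc_of_le hab]
    exact Icc_subset_Icc ha hb
  have key : ∀ x ∈ Icc (0:ℝ) (π/2),
      (∫ t in (0:ℝ)..x, h t * q t) * (∫ t in (0:ℝ)..(π/2), q t)
        ≤ (∫ t in (0:ℝ)..(π/2), h t * q t) * (∫ t in (0:ℝ)..x, q t) := by
    intro x hx
    obtain ⟨hx0, hx2⟩ := hx
    have hxmem : x ∈ Icc (0:ℝ) (π/2) := ⟨hx0, hx2⟩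
    set Hx := ∫ t in (0:ℝ)..x, h t * q t with hHx
    set Ht := ∫ t in x..(π/2), h t * q t with hHt
    set Gx := ∫ t in (0:ℝ)..x, q t with hGxd
    set Gt := ∫ t in x..(π/2), q t with hGtd
    have hintx := hInt 0 x le_rfl hx2 hx0
    have hintt := hInt x (π/2) hx0 le_rfl hx2
    have hsplitH : Hx + Ht = ∫ t in (0:ℝ)..(π/2), h t * q t :=
      intervalIntegral.integral_add_adjacent_intervals hintx hintt
    have hsplitG : Gx + Gt = ∫ t in (0:ℝ)..(π/2), q t :=
      intervalIntegral.integral_add_adjacent_intervals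
        (hqc.intervalIntegrable _ _) (hqc.intervalIntegrable _ _)
    have e1 : Hx ≤ h x * Gx := by
      have h1 : Hx ≤ ∫ t in (0:ℝ)..x, h x * q t := by
        apply intervalIntegral.integral_mono_on hx0 hintx
          ((continuous_const.mul hqc).intervalIntegrable _ _)
        intro t ht
        have htmem : t ∈ Icc (0:ℝ) (π/2) := ⟨ht.1, ht.2.trans hx2⟩
        exact mul_le_mul_of_nonneg_right (hm.monotoneOn htmem hxmem ht.2) (hqnn t htmem)
      rwa [intervalIntegral.integral_const_mul] at h1
    have e2 : h x * Gt ≤ Ht := by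
      have h1 : (∫ t in x..(π/2), h x * q t) ≤ Ht := by
        apply intervalIntegral.integral_mono_on hx2
          ((continuous_const.mul hqc).intervalIntegrable _ _) hintt
        intro t ht
        have htmem : t ∈ Icc (0:ℝ) (π/2) := ⟨hx0.trans ht.1, ht.2⟩
        exact mul_le_mul_of_nonneg_right (hm.monotoneOn hxmem htmem ht.1) (hqnn t htmem)
      rwa [intervalIntegral.integral_const_mul] at h1
    have hGx : 0 ≤ Gx :=
      intervalIntegral.integral_nonneg hx0 (fun t ht => hqnn t ⟨ht.1, ht.2.trans hx2⟩)
    have hGt : 0 ≤ Gt :=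
      intervalIntegral.integral_nonneg hx2 (fun t ht => hqnn t ⟨hx0.trans ht.1, ht.2⟩)
    rw [← hsplitH, ← hsplitG]
    nlinarith [mul_le_mul_of_nonneg_right e1 hGt, mul_le_mul_of_nonneg_right e2 hGx]
  have hQpos : 0 < ∫ t in (0:ℝ)..(π/2), q t := by
    apply intervalIntegral.intervalIntegral_pos_of_pos_on (hqc.intervalIntegrable _ _) _ hπ
    intro t ht
    exact pow_pos (Real.sin_pos_of_pos_of_lt_pi ht.1
      (ht.2.trans (half_lt_self Real.pi_pos))) k
  set A : ℝ := (∫ t in (0:ℝ)..(π/2), h t * q t) / (∫ t in (0:ℝ)..(π/2), q t) with hA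
  have pointwise : ∀ θ, (∫ t in (0:ℝ)..(φ θ), h t * q t)
      ≤ A * ∫ t in (0:ℝ)..(φ θ), q t := by
    intro θ
    rw [hA, div_mul_eq_mul_div, le_div_iff₀ hQpos]
    exact key (φ θ) (hφr θ)
  have hmeas : ∀ f : ℝ → ℝ, ContinuousOn f (Icc 0 (π/2)) →
      Measurable fun θ => ∫ t in (0:ℝ)..(φ θ), f t := by
    intro f hf
    have hcont : ContinuousOn (fun x => ∫ t in (0:ℝ)..x, f t) (Icc 0 (π/2)) := by
      have h1 := intervalIntegral.continuousOn_primitive_interval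
        (a := 0) (b := π/2) (μ := volume) (f := f) (by rw [uIcc_of_le hπ.le]; exact hf.integrableOn_Icc)
      rwa [uIcc_of_le hπ.le] at h1
    have hF := continuousOn_iff_continuous_restrict.mp hcont
    have hφ' : Measurable (fun θ => (⟨φ θ, hφr θ⟩ : Icc (0:ℝ) (π/2))) :=
      Measurable.subtype_mk hφ
    have h2 := hF.measurable.comp hφ'
    exact h2
  have hbound : ∀ f : ℝ → ℝ, ContinuousOn f (Icc 0 (π/2)) → ∀ θ,
      |∫ t in (0:ℝ)..(φ θ), f t| ≤ ∫ t in (0:ℝ)..(π/2), |f t| := by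
    intro f hf θ
    obtain ⟨h0, h2⟩ := hφr θ
    have habs : ContinuousOn (fun t => |f t|) (Icc 0 (π/2)) := hf.abs
    calc |∫ t in (0:ℝ)..(φ θ), f t| ≤ ∫ t in (0:ℝ)..(φ θ), |f t| :=
          intervalIntegral.abs_integral_le_integral_abs h0
      _ ≤ ∫ t in (0:ℝ)..(π/2), |f t| := by
          apply intervalIntegral.integral_mono_interval le_rfl h0 h2
          · filter_upwards with t
            simp only [Pi.zero_apply]
            exact abs_nonneg _
          · apply ContinuousOn.intervalIntegrable
            rwa [uIcc_of_le hπ.le]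
  haveI hfin : IsFiniteMeasure ((μH[(k:ℝ)] : Measure (Euc (k+1))).restrict
      (sphere (0 : Euc (k+1)) 1)) := by
    constructor
    rw [Measure.restrict_apply_univ]
    exact sphere_hausdorff_lt_top k
  have hhqcont : ContinuousOn (fun t => h t * q t) (Icc 0 (π/2)) := hc.mul hqc.continuousOn
  have hmeasf := hmeas _ hhqcont
  have hmeasg := hmeas q hqc.continuousOn
  have hintf : Integrable (fun θ => ∫ t in (0:ℝ)..(φ θ), h t * q t)
      ((μH[(k:ℝ)]).restrict (sphere (0 : Euc (k+1)) 1)) := by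
    apply Integrable.mono' (integrable_const (∫ t in (0:ℝ)..(π/2), |h t * q t|))
      hmeasf.aestronglyMeasurable
    filter_upwards with θ
    rw [Real.norm_eq_abs]
    exact hbound _ hhqcont θ
  have hintg : Integrable (fun θ => ∫ t in (0:ℝ)..(φ θ), q t)
      ((μH[(k:ℝ)]).restrict (sphere (0 : Euc (k+1)) 1)) := by
    apply Integrable.mono' (integrable_const (∫ t in (0:ℝ)..(π/2), |q t|))
      hmeasg.aestronglyMeasurable
    filter_upwards with θ
    rw [Real.norm_eq_abs]
    exact hbound _ hqc.continuousOn θ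
  calc (∫ θ in sphere (0 : Euc (k+1)) 1, (∫ t in (0:ℝ)..(φ θ), h t * q t) ∂(μH[(k:ℝ)]))
      ≤ ∫ θ in sphere (0 : Euc (k+1)) 1, A * (∫ t in (0:ℝ)..(φ θ), q t) ∂(μH[(k:ℝ)]) :=
        integral_mono hintf (hintg.const_mul A) pointwise
    _ = A * ∫ θ in sphere (0 : Euc (k+1)) 1, (∫ t in (0:ℝ)..(φ θ), q t) ∂(μH[(k:ℝ)]) :=
        MeasureTheory.integral_const_mul A _


open Real in
theorem stmt10 {n : ℕ} (hn : 2 ≤ n) (h : ℝ → ℝ)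
    (hc : ContinuousOn h (Icc 0 (π/2))) (hm : StrictMonoOn h (Icc 0 (π/2)))
    (φ : Euc (n-1) → ℝ) (hφ : Measurable φ)
    (hφr : ∀ θ, φ θ ∈ Icc (0:ℝ) (π/2)) :
    (∫ θ in sphere (0 : Euc (n-1)) 1,
        (∫ t in (0:ℝ)..(φ θ), h t * Real.sin t ^ (n-2)) ∂(μH[(n:ℝ) - 2]))
      ≤ ((∫ t in (0:ℝ)..(π/2), h t * Real.sin t ^ (n-2))
            / (∫ t in (0:ℝ)..(π/2), Real.sin t ^ (n-2)))
          * ∫ θ in sphere (0 : Euc (n-1)) 1,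
              (∫ t in (0:ℝ)..(φ θ), Real.sin t ^ (n-2)) ∂(μH[(n:ℝ) - 2]) := by
  obtain ⟨k, rfl⟩ : ∃ k, n = k + 2 := ⟨n - 2, by omega⟩
  rw [show ((k+2:ℕ):ℝ) - 2 = (k:ℝ) by push_cast; ring]
  exact stmt10_aux k h hc hm φ hφ hφr
end
end

section
/- Let λ > 0 and let S ⊂ ℝⁿ be the λ-convex spindle with vertices p and q, |p−q| = d, 0 < d < 2/λ. Then the circumradius of S equals d/2, and the smallest enclosing ball is the ball with diameter [p,q]. -/
open Metric Set MeasureTheory Pointwise RealInnerProductSpace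

noncomputable section

theorem stmt15 {n : ℕ} (lam : ℝ) (hlam : 0 < lam) (p q : Euc n)
    (hpq : 0 < dist p q) (hd : dist p q < 2/lam) :
    circumradius (spindle lam p q) = dist p q / 2 ∧
      spindle lam p q ⊆ closedBall (midpoint ℝ p q) (dist p q / 2) ∧
      ∀ (c : Euc n) (r : ℝ), spindle lam p q ⊆ closedBall c r →
        r ≤ dist p q / 2 → c = midpoint ℝ p q ∧ r = dist p q / 2 := by
  set m := midpoint ℝ p q with hm
  have hρ : (0:ℝ) < 1/lam := by positivity
  have hd2 : dist p q / 2 < 1/lam := by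
    have : 2*(1/lam) = 2/lam := by ring
    linarith
  have hpm : dist p m = dist p q / 2 := by
    rw [hm, dist_left_midpoint (𝕜 := ℝ)]
    norm_num
    ring
  have hqm : dist q m = dist p q / 2 := by
    rw [hm, dist_right_midpoint (𝕜 := ℝ)]
    norm_num
    ring
  have hps : p ∈ spindle lam p q := Set.mem_iInter₂.mpr fun c hc => hc.1
  have hqs : q ∈ spindle lam p q := Set.mem_iInter₂.mpr fun c hc => hc.2
  have hsub : spindle lam p q ⊆ closedBall m (dist p q / 2) := by
    intro x hx
    rw [mem_closedBall]
    by_contra h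
    push_neg at h
    have hs : 0 < dist x m := lt_trans (by positivity) h
    set t : ℝ := 1/lam - dist p q / 2 with ht
    have htpos : 0 < t := by rw [ht]; linarith
    set c : Euc n := m + (t / dist x m) • (m - x) with hc
    have hnorm : ‖(t / dist x m) • (m - x)‖ = t := by
      rw [norm_smul, Real.norm_of_nonneg (by positivity)]
      rw [show ‖m - x‖ = dist x m from by rw [dist_comm, dist_eq_norm]]
      field_simp
    have hxc : dist x c = dist x m + t := by
      have hxc' : x - c = (1 + t / dist x m) • (x - m) := by
        rw [hc]
        rw [show m - x = -(x - m) from by abel]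
        rw [smul_neg]
        rw [add_smul, one_smul]
        abel
      rw [dist_eq_norm, hxc', norm_smul, Real.norm_of_nonneg (by positivity),
        ← dist_eq_norm]
      field_simp
    have hpc : dist p c ≤ 1/lam := by
      have : dist p c ≤ dist p m + dist m c := dist_triangle p m c
      have hmc : dist m c = t := by
        rw [dist_eq_norm, hc, show m - (m + (t / dist x m) • (m - x)) = -((t / dist x m) • (m - x)) from by abel, norm_neg, hnorm]
      rw [hmc, hpm] at this
      linarith
    have hqc : dist q c ≤ 1/lam := by
      have : dist q c ≤ dist q m + dist m c := dist_triangle q m c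
      have hmc : dist m c = t := by
        rw [dist_eq_norm, hc, show m - (m + (t / dist x m) • (m - x)) = -((t / dist x m) • (m - x)) from by abel, norm_neg, hnorm]
      rw [hmc, hqm] at this
      linarith
    have hxin := Set.mem_iInter₂.mp hx c ⟨mem_closedBall.mpr hpc, mem_closedBall.mpr hqc⟩
    rw [mem_closedBall, hxc] at hxin
    simp only [ht] at hxin
    linarith
  have hlb : ∀ r ∈ {r : ℝ | ∃ c, spindle lam p q ⊆ closedBall c r}, dist p q / 2 ≤ r := by
    rintro r ⟨c, hc⟩
    have h1 := mem_closedBall.mp (hc hps)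
    have h2 := mem_closedBall.mp (hc hqs)
    have h3 := dist_triangle p c q
    rw [dist_comm c q] at h3
    linarith
  have hmem : (dist p q / 2) ∈ {r : ℝ | ∃ c, spindle lam p q ⊆ closedBall c r} := ⟨m, hsub⟩
  refine ⟨le_antisymm (csInf_le ⟨dist p q / 2, hlb⟩ hmem) (le_csInf ⟨_, hmem⟩ hlb), hsub, ?_⟩
  intro c r hcr hr
  have h1 := mem_closedBall.mp (hcr hps)
  have h2 := mem_closedBall.mp (hcr hqs)
  have h3 := dist_triangle p c q
  rw [dist_comm c q] at h3
  have hrd : r = dist p q / 2 := by linarith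
  have hpc : dist p c = dist p q / 2 := by linarith
  have hcq : dist c q = dist p q / 2 := by rw [dist_comm]; linarith
  exact ⟨eq_midpoint_of_dist_eq_half hpc hcq, hrd⟩
end
end

section
/- Let K ⊂ ℝⁿ be a convex body with inscribed ball B of radius r centered at the origin. Then the set of touching points ∂K ∩ ∂B is not contained in any open hemisphere of ∂B; that is, there is no unit vector v with ⟨v, x⟩ > 0 for all x ∈ ∂K ∩ ∂B. -/
open Metric Set MeasureTheory Pointwise RealInnerProductSpace

noncomputable section

set_option maxHeartbeats 1000000 in
theorem stmt16 {n : ℕ} (K : Set (Euc n)) (hK : IsConvexBody K) (r : ℝ) (hr : 0 < r)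
    (hsub : closedBall (0 : Euc n) r ⊆ K)
    (hmax : ∀ (c : Euc n) (r' : ℝ), closedBall c r' ⊆ K → r' ≤ r) :
    ¬ ∃ v : Euc n, ‖v‖ = 1 ∧
        ∀ x ∈ frontier K ∩ sphere (0 : Euc n) r, 0 < (inner ℝ v x : ℝ) := by
  rintro ⟨v, hv, hvpos⟩
  have hKclosed : IsClosed K := hK.1.isClosed
  have hballint : ball (0 : Euc n) r ⊆ interior K := by
    rw [← interior_closedBall (0 : Euc n) hr.ne']
    exact interior_mono hsub
  set T : Set (Euc n) := frontier K ∩ sphere 0 r with hT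
  have hTcompact : IsCompact T := (isCompact_sphere 0 r).inter_left isClosed_frontier
  have hcont : Continuous (fun x : Euc n => (inner ℝ v x : ℝ)) :=
    continuous_const.inner continuous_id
  obtain ⟨c, hc0, hcT⟩ : ∃ c > 0, ∀ x ∈ T, c < (inner ℝ v x : ℝ) := by
    rcases T.eq_empty_or_nonempty with h | h
    · exact ⟨1, one_pos, by simp [h]⟩
    · obtain ⟨x₀, hx₀, hmin⟩ := hTcompact.exists_isMinOn h hcont.continuousOn
      have hx₀pos : 0 < (inner ℝ v x₀ : ℝ) := hvpos x₀ hx₀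
      refine ⟨(inner ℝ v x₀ : ℝ) / 2, by linarith, fun x hx => ?_⟩
      have h2 := hmin hx
      simp only [Set.mem_setOf_eq] at h2
      linarith
  have hcint : ∀ x ∈ closedBall (0 : Euc n) r, (inner ℝ v x : ℝ) ≤ c → x ∈ interior K := by
    intro x hx hxc
    by_contra hxint
    have hxT : x ∈ T := by
      refine ⟨?_, ?_⟩
      · rw [hKclosed.frontier_eq]
        exact ⟨hsub hx, hxint⟩
      · rw [mem_sphere_zero_iff_norm]
        rcases lt_or_eq_of_le (mem_closedBall_zero_iff.mp hx) with h | h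
        · exact absurd (hballint (mem_ball_zero_iff.mpr h)) hxint
        · exact h
    exact absurd hxc (not_le.mpr (hcT x hxT))
  set C : Set (Euc n) := closedBall 0 r ∩ {x | (inner ℝ v x : ℝ) ≤ c} with hC
  have hCcompact : IsCompact C :=
    (isCompact_closedBall 0 r).inter_right (isClosed_le hcont continuous_const)
  have hCsub : C ⊆ interior K := fun x hx => hcint x hx.1 hx.2
  obtain ⟨δ, hδ0, hδ⟩ := hCcompact.exists_thickening_subset_open isOpen_interior hCsub
  set ε : ℝ := min c (δ/3) with hε
  have hε0 : 0 < ε := lt_min hc0 (by linarith)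
  have hεc : ε ≤ c := min_le_left _ _
  have hεδ : ε ≤ δ/3 := min_le_right _ _
  set ρ : ℝ := min (δ/3) (min 1 (ε^2/(2*r+1))) with hρ
  have hρ0 : 0 < ρ := lt_min (by linarith) (lt_min one_pos (div_pos (by positivity) (by linarith)))
  have hρδ : ρ ≤ δ/3 := min_le_left _ _
  have hρ1 : ρ ≤ 1 := le_trans (min_le_right _ _) (min_le_left _ _)
  have hρε : ρ ≤ ε^2/(2*r+1) := le_trans (min_le_right _ _) (min_le_right _ _)
  have hsub' : closedBall (-(ε • v)) (r + ρ) ⊆ K := by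
    intro y hy
    set z : Euc n := y + ε • v with hz
    have hzy : y = z - ε • v := by rw [hz]; abel
    have hznorm : ‖z‖ ≤ r + ρ := by
      have h1 : dist y (-(ε • v)) ≤ r + ρ := mem_closedBall.mp hy
      rw [dist_eq_norm, sub_neg_eq_add] at h1
      exact h1
    have hdyz : dist y z = ε := by
      rw [dist_eq_norm, hzy]
      simp [norm_smul, hv, abs_of_pos hε0]
    have hynorm2 : ‖y‖^2 = ‖z‖^2 - 2*ε*(inner ℝ v z : ℝ) + ε^2 := by
      rw [hzy, norm_sub_sq_real, real_inner_smul_right, norm_smul, hv,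
        real_inner_comm, Real.norm_eq_abs, abs_of_pos hε0]
      ring
    by_cases hcase : ε ≤ (inner ℝ v z : ℝ)
    · have hz2 : ‖z‖^2 ≤ (r+ρ)^2 := by nlinarith [norm_nonneg z]
      have h2 : 2*ε*ε ≤ 2*ε*(inner ℝ v z : ℝ) :=
        mul_le_mul_of_nonneg_left hcase (by linarith)
      have h3 : ρ*(2*r+1) ≤ ε^2 :=
        (le_div_iff₀ (by linarith : (0:ℝ) < 2*r+1)).mp hρε
      have h4 : ρ^2 ≤ ρ := by nlinarith
      have h5 : (r+ρ)^2 = r^2 + 2*r*ρ + ρ^2 := by ring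
      have hy2 : ‖y‖^2 ≤ r^2 := by nlinarith
      have : ‖y‖ ≤ r := by nlinarith [norm_nonneg y]
      exact hsub (mem_closedBall_zero_iff.mpr this)
    · push_neg at hcase
      have key : ∃ w ∈ C, dist y w < δ := by
        by_cases hzr : ‖z‖ ≤ r
        · refine ⟨z, ⟨mem_closedBall_zero_iff.mpr hzr, le_of_lt (lt_of_lt_of_le hcase hεc)⟩, ?_⟩
          rw [hdyz]; linarith
        · push_neg at hzr
          have hz0 : (0:ℝ) < ‖z‖ := lt_trans hr hzr
          refine ⟨(r/‖z‖) • z, ⟨?_, ?_⟩, ?_⟩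
          · rw [mem_closedBall_zero_iff, norm_smul, Real.norm_eq_abs,
              abs_of_pos (div_pos hr hz0), div_mul_cancel₀ _ hz0.ne']
          · show (inner ℝ v ((r/‖z‖) • z) : ℝ) ≤ c
            rw [real_inner_smul_right]
            have ht1 : r/‖z‖ ≤ 1 := by
              rw [div_le_one hz0]; exact le_of_lt hzr
            have ht0 : (0:ℝ) < r/‖z‖ := by positivity
            rcases le_or_gt (inner ℝ v z : ℝ) 0 with hp | hp
            · have : r/‖z‖ * (inner ℝ v z : ℝ) ≤ 0 := mul_nonpos_of_nonneg_of_nonpos ht0.le hp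
              linarith
            · have : r/‖z‖ * (inner ℝ v z : ℝ) ≤ 1 * (inner ℝ v z : ℝ) :=
                mul_le_mul_of_nonneg_right ht1 hp.le
              linarith
          · have hdzz : dist z ((r/‖z‖) • z) = ‖z‖ - r := by
              rw [dist_eq_norm]
              have : z - (r/‖z‖) • z = (1 - r/‖z‖) • z := by
                rw [sub_smul, one_smul]
              rw [this, norm_smul, Real.norm_eq_abs,
                abs_of_nonneg (by rw [sub_nonneg, div_le_one hz0]; exact le_of_lt hzr)]
              field_simp
            calc dist y ((r/‖z‖) • z) ≤ dist y z + dist z ((r/‖z‖) • z) := dist_triangle _ _ _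
              _ = ε + (‖z‖ - r) := by rw [hdyz, hdzz]
              _ < δ := by linarith
      obtain ⟨w, hw, hdw⟩ := key
      have : y ∈ thickening δ C := mem_thickening_iff.mpr ⟨w, hw, hdw⟩
      exact interior_subset (hδ this)
  have := hmax _ _ hsub'
  linarith
end
end

section
/- Let λ > 0 and let K ⊂ ℝⁿ be a λ-convex body containing a ball of radius ρ ≤ 1/λ. Let p be a boundary point of K at which K is tangent to that ball (the ball touches ∂K at p). Then K is contained in the closed ball of radius 1/λ that is tangent to the inscribed ball at p and contains it; i.e., if the inner ball is B_ρ(o) and p ∈ ∂B_ρ(o) ∩ ∂K, then K ⊆ B_{1/λ}(o + (ρ − 1/λ)·(p − o)/ρ). -/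
open Metric Set MeasureTheory Pointwise RealInnerProductSpace

noncomputable section

theorem stmt19 {n : ℕ} (lam ρ : ℝ) (hlam : 0 < lam) (hρ : 0 < ρ) (hρl : ρ ≤ 1/lam)
    (K : Set (Euc n)) (hK : IsLamConvex lam K) (o : Euc n)
    (hsub : closedBall o ρ ⊆ K) (p : Euc n)
    (hp : p ∈ sphere o ρ ∩ frontier K) :
    K ⊆ closedBall (o + ((ρ - 1/lam)/ρ) • (p - o)) (1/lam) := by
  obtain ⟨⟨hKcomp, hKconv, hKint⟩, C, hCne, hKeq⟩ := hK
  obtain ⟨hpsph, hpfr⟩ := hp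
  have hil : (0:ℝ) < 1/lam := by positivity
  have hKcl : IsClosed K := hKcomp.isClosed
  have hpK : p ∈ K := hKcl.closure_eq ▸ hpfr.1
  -- p is in the closure of the complement of K
  have hclos : p ∈ closure Kᶜ := by
    rw [closure_compl]; exact hpfr.2
  obtain ⟨q, hq, hqlim⟩ := mem_closure_iff_seq_limit.mp hclos
  -- choose supporting centers
  have hchoice : ∀ k, ∃ c ∈ C, 1/lam < dist (q k) c := by
    intro k
    by_contra h
    push_neg at h
    exact hq k (hKeq ▸ mem_iInter₂.mpr fun c hc => mem_closedBall.mpr (h c hc))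
  choose c hcC hcd using hchoice
  have hKsub : ∀ x ∈ K, ∀ k, dist x (c k) ≤ 1/lam := by
    intro x hx k
    rw [hKeq] at hx
    exact mem_closedBall.mp (mem_iInter₂.mp hx (c k) (hcC k))
  have hcball : ∀ k, c k ∈ closedBall p (1/lam) := fun k =>
    mem_closedBall'.mpr (hKsub p hpK k)
  obtain ⟨cl, hclb, φ, hφ, hφlim⟩ :=
    (isCompact_closedBall p (1/lam)).tendsto_subseq hcball
  -- K ⊆ closedBall cl (1/lam)
  have hKc : ∀ x ∈ K, dist x cl ≤ 1/lam := by
    intro x hx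
    have ht : Filter.Tendsto (fun k => dist x (c (φ k))) Filter.atTop (nhds (dist x cl)) :=
      (Filter.Tendsto.dist tendsto_const_nhds hφlim)
    exact le_of_tendsto ht (Filter.Eventually.of_forall fun k => hKsub x hx (φ k))
  -- dist p cl = 1/lam
  have hpc : dist p cl = 1/lam := by
    refine le_antisymm (hKc p hpK) ?_
    have h1 : Filter.Tendsto (fun k => 1/lam - dist (q (φ k)) p) Filter.atTop (nhds (1/lam)) := by
      have : Filter.Tendsto (fun k => dist (q (φ k)) p) Filter.atTop (nhds 0) := by
        have := (hqlim.comp hφ.tendsto_atTop).dist (tendsto_const_nhds (x := p))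
        simpa using this
      simpa using (tendsto_const_nhds.sub this)
    have h2 : Filter.Tendsto (fun k => dist p (c (φ k))) Filter.atTop (nhds (dist p cl)) :=
      Filter.Tendsto.dist tendsto_const_nhds hφlim
    refine le_of_tendsto_of_tendsto' h1 h2 fun k => ?_
    have := hcd (φ k)
    have htr : dist (q (φ k)) (c (φ k)) ≤ dist (q (φ k)) p + dist p (c (φ k)) :=
      dist_triangle _ _ _
    linarith
  -- dist o cl ≤ 1/lam - ρ
  have hoc : dist o cl ≤ 1/lam - ρ := by
    rcases eq_or_ne o cl with rfl | hne
    · simp only [dist_self]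
      linarith
    · set d := dist o cl with hd
      have hdpos : 0 < d := dist_pos.mpr hne
      set x := o + (ρ/d) • (o - cl) with hx
      have hxo : dist x o = ρ := by
        rw [hx, dist_eq_norm]
        simp only [add_sub_cancel_left, norm_smul]
        rw [← dist_eq_norm, ← hd]
        rw [Real.norm_eq_abs, abs_of_pos (by positivity)]
        field_simp
      have hxc : dist x cl = d + ρ := by
        rw [hx, dist_eq_norm]
        have : o + (ρ/d) • (o - cl) - cl = (1 + ρ/d) • (o - cl) := by
          module
        rw [this, norm_smul, ← dist_eq_norm, ← hd, Real.norm_eq_abs,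
          abs_of_pos (by positivity)]
        field_simp
      have hxK : x ∈ K := hsub (mem_closedBall.mpr (by rw [hxo]))
      have := hKc x hxK
      rw [hxc] at this
      linarith
  -- triangle equality
  have hposph : dist p o = ρ := by
    have := mem_sphere.mp hpsph; rwa [this] at this ⊢
  have heq : dist p o + dist o cl = dist p cl := by
    have htr := dist_triangle p o cl
    rw [hpc]
    rw [hposph] at htr ⊢
    linarith
  have hwb : Wbtw ℝ p o cl := dist_add_dist_eq_iff.mp heq
  have hseg : o ∈ segment ℝ p cl := mem_segment_iff_wbtw.mpr hwb
  obtain ⟨a, b, ha, hb, hab, habo⟩ := hseg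
  have hop : o - p = b • (cl - p) := by
    have : a = 1 - b := by linarith
    rw [this] at habo
    rw [← habo]; module
  have hbval : b = lam * ρ := by
    have hn : ‖o - p‖ = b * ‖cl - p‖ := by
      rw [hop, norm_smul, Real.norm_eq_abs, abs_of_nonneg hb]
    rw [← dist_eq_norm, ← dist_eq_norm, dist_comm o p, hposph, dist_comm cl p, hpc] at hn
    field_simp at hn
    nlinarith
  have hbpos : 0 < b := by rw [hbval]; positivity
  have hcl : cl = o + ((ρ - 1/lam)/ρ) • (p - o) := by
    have h1 : cl - p = b⁻¹ • (o - p) := by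
      rw [hop, smul_smul, inv_mul_cancel₀ (ne_of_gt hbpos), one_smul]
    have h2 : cl = p + b⁻¹ • (o - p) := by
      rw [← h1]; module
    rw [h2, hbval]
    match_scalars <;> field_simp <;> ring
  rw [← hcl]
  exact fun x hx => mem_closedBall.mpr (hKc x hx)
end
end
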